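/- Let f : M → N be a smooth map between smooth manifolds with boundary such that the differential mfderiv f at every point p ∈ M is surjective (i.e., f is a submersion). Then f maps the interior of M into the interior of N, i.e., f(interior M) ⊆ interior N. -/

import Mathlib

open Set Filter Topology

/-- A submersion between smooth manifolds with boundary maps interior points to
interior points: `f '' (interior M) ⊆ interior N`. -/
theorem submersion_image_interior_subset_interior
    {E : Type*} [NormedAddCommGroup E] [NormedSpace ℝ E] [FiniteDimensional ℝ E]
    {H : Type*} [TopologicalSpace H] (I : ModelWithCorners ℝ E H)
    {E' : Type*} [NormedAddCommGroup E'] [NormedSpace ℝ E'] [FiniteDimensional ℝ E']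
    {H' : Type*} [TopologicalSpace H'] (J : ModelWithCorners ℝ E' H')
    (M : Type*) [TopologicalSpace M] [ChartedSpace H M] [IsManifold I (⊤ : ℕ∞) M]
    [T2Space M] [SecondCountableTopology M]
    (N : Type*) [TopologicalSpace N] [ChartedSpace H' N] [IsManifold J (⊤ : ℕ∞) N]
    [T2Space N] [SecondCountableTopology N]
    (f : M → N) (hf : ContMDiff I J (⊤ : ℕ∞) f)
    (hsub : ∀ p : M, Function.Surjective (mfderiv I J f p)) :
    f '' (I.interior M) ⊆ J.interior N := by
  rintro y ⟨p, hp, rfl⟩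
  have hmd : HasMFDerivAt I J f p (mfderiv I J f p) :=
    ((hf p).mdifferentiableAt (by simp)).hasMFDerivAt
  have h1 : HasFDerivWithinAt (writtenInExtChartAt I J p f) (mfderiv I J f p)
      (Set.range I) (extChartAt I p p) := hmd.2
  have hx : extChartAt I p p ∈ interior (Set.range I) := hp
  have h2 : HasFDerivAt (writtenInExtChartAt I J p f) (mfderiv I J f p) (extChartAt I p p) :=
    h1.hasFDerivAt (mem_interior_iff_mem_nhds.1 hx)
  have hcd : ContDiffAt ℝ ((⊤ : ℕ∞) : WithTop ℕ∞) (writtenInExtChartAt I J p f)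
      (extChartAt I p p) := by
    unfold writtenInExtChartAt
    exact (contMDiffAt_iff.1 (hf p)).2.contDiffAt (mem_interior_iff_mem_nhds.1 hx)
  have hst := hcd.hasStrictFDerivAt (by simp)
  have hsurj : LinearMap.range (fderiv ℝ (writtenInExtChartAt I J p f) (extChartAt I p p) : E →ₗ[ℝ] E') = ⊤ := by
    exact LinearMap.range_eq_top.2 (fun y => by obtain ⟨x, hx⟩ := hsub p y; exact ⟨x, by rw [ContinuousLinearMap.coe_coe, (show HasFDerivAt (writtenInExtChartAt I J p f) (show E →L[ℝ] E' from mfderiv I J f p) (extChartAt I p p) from h2).fderiv]; exact hx⟩)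
  have hmap := hst.map_nhds_eq_of_surj hsurj
  have hr : Set.range J ∈ Filter.map (writtenInExtChartAt I J p f) (𝓝 (extChartAt I p p)) := by
    refine Filter.mem_map.2 ?_
    filter_upwards with z using mem_range_self _
  rw [hmap] at hr
  have he : writtenInExtChartAt I J p f (extChartAt I p p) = extChartAt J (f p) (f p) := by
    simp [writtenInExtChartAt]
  rw [he] at hr
  show (extChartAt J (f p) (f p)) ∈ interior (Set.range J)
  exact mem_interior_iff_mem_nhds.2 hr
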